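/- arXiv:2306.08328 — 3 statements merged into one kernel-verified Lean document; each statement's English description precedes it below -/
import Mathlib

section
/- Let α ∈ (0,1), let B > 0, let q be a probability density on ℝ supported in [−B,B], and let p_T be a probability density on ℝ with ∫_ℝ |x| p_T(x) dx < ∞ and ∫_ℝ p_T(x) |log(p_T(x)/ρ_α(x))| dx < ∞. Let ω_α(x) = (1/α) ρ(x/α) · H(α,x). Then the integral ∫_ℝ p_T(x) log(p_T(x)/ω_α(x)) dx is well defined and finite, and ∫_ℝ p_T(x) log(p_T(x)/ω_α(x)) dx = ∫_ℝ p_T(x) log(p_T(x)/ρ_α(x)) dx + F(α), where F(α) = −∫_ℝ p_T(x) log H(α,x) dx. -/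
open MeasureTheory Real Filter
open scoped ENNReal Topology

/-- The standard Gaussian density on `ℝ`: `ρ(x) = (2π)^{-1/2} exp(-x²/2)`. -/
noncomputable def stdGaussianDensity (x : ℝ) : ℝ :=
  (Real.sqrt (2 * Real.pi))⁻¹ * Real.exp (-x ^ 2 / 2)

/-- The density `ρ_α(x) = (1/α) ρ(x/α)` of the centered Gaussian with variance `α²`. -/
noncomputable def rhoAlpha (α x : ℝ) : ℝ :=
  (1 / α) * stdGaussianDensity (x / α)

/-- The correction factor `H(α,x) = ∫ ν, exp(-(1/(2α²))((1-α)² ν² - 2(1-α) x ν)) q(ν) dν`. -/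
noncomputable def Hfun (q : ℝ → ℝ) (α x : ℝ) : ℝ :=
  ∫ ν : ℝ, Real.exp (-(1 / (2 * α ^ 2)) * ((1 - α) ^ 2 * ν ^ 2 - 2 * (1 - α) * x * ν)) * q ν

/-- The density `ω_α(x) = (1/α) ρ(x/α) · H(α,x)` of `(1-α)X' + αε`. -/
noncomputable def omegaFun (q : ℝ → ℝ) (α x : ℝ) : ℝ :=
  (1 / α) * stdGaussianDensity (x / α) * Hfun q α x

/-- KL decomposition: with `q` a probability density supported in `[-B,B]` and `p_T` a
probability density with finite first absolute moment and finite `KL(p_T‖ρ_α)`-integrand,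
the integral `∫ p_T log(p_T/ω_α)` is well defined and finite, and equals
`∫ p_T log(p_T/ρ_α) + F(α)` with `F(α) = -∫ p_T(x) log H(α,x) dx`. -/
theorem statement7 (α : ℝ) (hα : α ∈ Set.Ioo (0 : ℝ) 1) (B : ℝ) (hB : 0 < B)
    (q : ℝ → ℝ) (hq_meas : Measurable q) (hq_nonneg : ∀ x, 0 ≤ q x)
    (hq_one : ∫ x, q x = 1) (hq_supp : Function.support q ⊆ Set.Icc (-B) B)
    (pT : ℝ → ℝ) (hpT_meas : Measurable pT) (hpT_nonneg : ∀ x, 0 ≤ pT x)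
    (hpT_one : ∫ x, pT x = 1)
    (hpT_mom : Integrable (fun x => |x| * pT x))
    (hpT_kl : Integrable (fun x => pT x * |Real.log (pT x / rhoAlpha α x)|)) :
    Integrable (fun x => pT x * Real.log (pT x / omegaFun q α x)) ∧
    ∫ x : ℝ, pT x * Real.log (pT x / omegaFun q α x)
      = (∫ x : ℝ, pT x * Real.log (pT x / rhoAlpha α x))
        + (-∫ x : ℝ, pT x * Real.log (Hfun q α x)) := by
  obtain ⟨hα0, hα1⟩ := hα
  have hα2 : (0:ℝ) < α ^ 2 := by positivity
  have h1α : (0:ℝ) < 1 - α := by linarith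
  set a : ℝ := (1 - α) ^ 2 * B ^ 2 / (2 * α ^ 2) with ha
  set b : ℝ := (1 - α) * B / α ^ 2 with hb
  have ha0 : 0 ≤ a := by positivity
  have hb0 : 0 ≤ b := by positivity
  set c : ℝ → ℝ := fun x => a + b * |x| with hc
  have hc0 : ∀ x, 0 ≤ c x := fun x => by positivity
  have hq_int : Integrable q := by
    by_contra h
    rw [integral_undef h] at hq_one; norm_num at hq_one
  have hpT_int : Integrable pT := by
    by_contra h
    rw [integral_undef h] at hpT_one; norm_num at hpT_one
  -- bound on the exponent
  have hexp_bound : ∀ x ν, ν ∈ Set.Icc (-B) B →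
      |(-(1 / (2 * α ^ 2)) * ((1 - α) ^ 2 * ν ^ 2 - 2 * (1 - α) * x * ν))| ≤ c x := by
    intro x ν hν
    have hν2 : ν ^ 2 ≤ B ^ 2 := sq_le_sq' hν.1 hν.2
    have hxν : |x * ν| ≤ |x| * B := by
      rw [abs_mul]
      exact mul_le_mul_of_nonneg_left (abs_le.mpr ⟨hν.1, hν.2⟩) (abs_nonneg x)
    obtain ⟨h1, h2⟩ := abs_le.mp hxν
    have key : |(1 - α) ^ 2 * ν ^ 2 - 2 * (1 - α) * x * ν|
        ≤ (1 - α) ^ 2 * B ^ 2 + 2 * (1 - α) * (|x| * B) := by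
      rw [abs_le]
      have t1 := mul_le_mul_of_nonneg_left hν2 (sq_nonneg (1 - α))
      have t2 := mul_le_mul_of_nonneg_left h2 (by linarith : (0:ℝ) ≤ 2 * (1 - α))
      have t3 := mul_le_mul_of_nonneg_left h1 (by linarith : (0:ℝ) ≤ 2 * (1 - α))
      constructor <;> nlinarith [sq_nonneg ν, sq_nonneg (1 - α)]
    have hk : (0:ℝ) < 1 / (2 * α ^ 2) := by positivity
    rw [abs_mul, abs_neg, abs_of_pos hk]
    calc 1 / (2 * α ^ 2) * |(1 - α) ^ 2 * ν ^ 2 - 2 * (1 - α) * x * ν|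
        ≤ 1 / (2 * α ^ 2) * ((1 - α) ^ 2 * B ^ 2 + 2 * (1 - α) * (|x| * B)) :=
          mul_le_mul_of_nonneg_left key hk.le
      _ = c x := by rw [hc, ha, hb]; field_simp
  -- integrability of the integrand defining H
  have hH_int : ∀ x, Integrable (fun ν =>
      Real.exp (-(1 / (2 * α ^ 2)) * ((1 - α) ^ 2 * ν ^ 2 - 2 * (1 - α) * x * ν)) * q ν) := by
    intro x
    apply Integrable.mono' (hq_int.const_mul (Real.exp (c x)))
    · exact ((Real.measurable_exp.comp (by fun_prop)).mul hq_meas).aestronglyMeasurable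
    · filter_upwards with ν
      rw [Real.norm_eq_abs, abs_of_nonneg (mul_nonneg (Real.exp_pos _).le (hq_nonneg ν))]
      by_cases hqν : q ν = 0
      · simp [hqν]
      · have hνB : ν ∈ Set.Icc (-B) B := hq_supp (by simpa [Function.mem_support] using hqν)
        exact mul_le_mul_of_nonneg_right
          (Real.exp_le_exp.2 (abs_le.mp (hexp_bound x ν hνB)).2) (hq_nonneg ν)
  -- bounds on H
  have hH_ub : ∀ x, Hfun q α x ≤ Real.exp (c x) := by
    intro x
    have : Hfun q α x ≤ ∫ ν, Real.exp (c x) * q ν := by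
      apply integral_mono (hH_int x) (hq_int.const_mul _)
      intro ν
      by_cases hqν : q ν = 0
      · simp [hqν]
      · have hνB : ν ∈ Set.Icc (-B) B := hq_supp (by simpa [Function.mem_support] using hqν)
        exact mul_le_mul_of_nonneg_right
          (Real.exp_le_exp.2 (abs_le.mp (hexp_bound x ν hνB)).2) (hq_nonneg ν)
    rwa [integral_const_mul, hq_one, mul_one] at this
  have hH_lb : ∀ x, Real.exp (-(c x)) ≤ Hfun q α x := by
    intro x
    have : (∫ ν, Real.exp (-(c x)) * q ν) ≤ Hfun q α x := by
      apply integral_mono (hq_int.const_mul _) (hH_int x)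
      intro ν
      by_cases hqν : q ν = 0
      · simp [hqν]
      · have hνB : ν ∈ Set.Icc (-B) B := hq_supp (by simpa [Function.mem_support] using hqν)
        exact mul_le_mul_of_nonneg_right
          (Real.exp_le_exp.2 (abs_le.mp (hexp_bound x ν hνB)).1) (hq_nonneg ν)
    rwa [integral_const_mul, hq_one, mul_one] at this
  have hH_pos : ∀ x, 0 < Hfun q α x := fun x => lt_of_lt_of_le (Real.exp_pos _) (hH_lb x)
  have hlogH : ∀ x, |Real.log (Hfun q α x)| ≤ c x := by
    intro x
    rw [abs_le]
    constructor
    · exact (Real.le_log_iff_exp_le (hH_pos x)).mpr (hH_lb x)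
    · exact (Real.log_le_iff_le_exp (hH_pos x)).mpr (hH_ub x)
  -- measurability of H
  have hH_meas : Measurable fun x => Hfun q α x := by
    have : StronglyMeasurable fun p : ℝ × ℝ =>
        Real.exp (-(1 / (2 * α ^ 2)) * ((1 - α) ^ 2 * p.2 ^ 2 - 2 * (1 - α) * p.1 * p.2)) * q p.2 :=
      ((Real.measurable_exp.comp (by fun_prop)).mul
        (hq_meas.comp measurable_snd)).stronglyMeasurable
    exact this.integral_prod_right'.measurable
  have hρpos : ∀ x, 0 < rhoAlpha α x := by
    intro x
    unfold rhoAlpha stdGaussianDensity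
    have := Real.pi_pos
    positivity
  have hρmeas : Measurable fun x => rhoAlpha α x := by
    unfold rhoAlpha stdGaussianDensity
    fun_prop
  -- integrability pieces
  have hint2 : Integrable (fun x => pT x * Real.log (Hfun q α x)) := by
    apply Integrable.mono' ((hpT_int.const_mul a).add (hpT_mom.const_mul b))
    · exact (hpT_meas.mul (Real.measurable_log.comp hH_meas)).aestronglyMeasurable
    · filter_upwards with x
      rw [Real.norm_eq_abs, abs_mul, abs_of_nonneg (hpT_nonneg x)]
      calc pT x * |Real.log (Hfun q α x)| ≤ pT x * c x :=
            mul_le_mul_of_nonneg_left (hlogH x) (hpT_nonneg x)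
        _ = a * pT x + b * (|x| * pT x) := by rw [hc]; ring
  have hint1 : Integrable (fun x => pT x * Real.log (pT x / rhoAlpha α x)) := by
    apply Integrable.mono' hpT_kl
    · exact (hpT_meas.mul (Real.measurable_log.comp (hpT_meas.div hρmeas))).aestronglyMeasurable
    · filter_upwards with x
      rw [Real.norm_eq_abs, abs_mul, abs_of_nonneg (hpT_nonneg x)]
  -- pointwise identity
  have hkey : ∀ x, pT x * Real.log (pT x / omegaFun q α x)
      = pT x * Real.log (pT x / rhoAlpha α x) - pT x * Real.log (Hfun q α x) := by
    intro x
    rcases eq_or_lt_of_le (hpT_nonneg x) with h0 | h0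
    · simp [← h0]
    · have hω : omegaFun q α x = rhoAlpha α x * Hfun q α x := rfl
      rw [hω, div_mul_eq_div_div,
        Real.log_div (div_pos h0 (hρpos x)).ne' (hH_pos x).ne', mul_sub]
  have hfun_eq : (fun x => pT x * Real.log (pT x / omegaFun q α x))
      = fun x => pT x * Real.log (pT x / rhoAlpha α x) - pT x * Real.log (Hfun q α x) :=
    funext hkey
  constructor
  · rw [hfun_eq]; exact hint1.sub hint2
  · rw [hfun_eq, integral_sub hint1 hint2, sub_eq_add_neg]
end

section
/- Let B, C > 0, let q be a probability density on ℝ supported in [−B,B], and let p_T be a bounded probability density on ℝ supported in [−C,C]. For α ∈ (0,1) let ω_α(x) = (1/α) ρ(x/α) · H(α,x). Then ∫_ℝ p_T(x) log(p_T(x)/ω_α(x)) dx → ∫_ℝ p_T(x) log(p_T(x)/ρ(x)) dx as α → 1 from the left. -/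
open MeasureTheory Real Filter
open scoped ENNReal Topology

lemma stdGaussianDensity_pos (x : ℝ) : 0 < stdGaussianDensity x := by
  have : 0 < Real.sqrt (2 * Real.pi) := Real.sqrt_pos.2 (by positivity)
  unfold stdGaussianDensity
  positivity

lemma stdGaussianDensity_le (x : ℝ) : stdGaussianDensity x ≤ (Real.sqrt (2 * Real.pi))⁻¹ := by
  have h1 : 0 < Real.sqrt (2 * Real.pi) := Real.sqrt_pos.2 (by positivity)
  have h2 : Real.exp (-x ^ 2 / 2) ≤ 1 := by
    rw [Real.exp_le_one_iff]; nlinarith [sq_nonneg x]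
  calc stdGaussianDensity x ≤ (Real.sqrt (2 * Real.pi))⁻¹ * 1 := by
        unfold stdGaussianDensity
        exact mul_le_mul_of_nonneg_left h2 (by positivity)
    _ = _ := mul_one _

lemma expo_abs_le {B C α x ν : ℝ} (hα : α ∈ Set.Ioo (1/2 : ℝ) 1)
    (hx : |x| ≤ C) (hν : |ν| ≤ B) :
    |(-(1 / (2 * α ^ 2)) * ((1 - α) ^ 2 * ν ^ 2 - 2 * (1 - α) * x * ν))|
      ≤ 2 * (B ^ 2 + 2 * C * B) := by
  obtain ⟨h1, h2⟩ := hα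
  have hα0 : (0:ℝ) < α := lt_trans (by norm_num) h1
  have h2α : (0:ℝ) < 2 * α ^ 2 := by positivity
  have hB0 : 0 ≤ B := le_trans (abs_nonneg ν) hν
  have hC0 : 0 ≤ C := le_trans (abs_nonneg x) hx
  have hinv : 1 / (2 * α ^ 2) ≤ 2 := by
    rw [div_le_iff₀ h2α]; nlinarith
  have hν2 : ν ^ 2 ≤ B ^ 2 := by
    have := abs_le.1 hν; nlinarith [abs_nonneg ν, sq_abs ν]
  have h1a : (0:ℝ) ≤ 1 - α := by linarith
  have h1a1 : (1 - α) ^ 2 ≤ 1 := by nlinarith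
  have habs1 : |(1 - α) ^ 2 * ν ^ 2| ≤ B ^ 2 := by
    rw [abs_of_nonneg (by positivity)]
    nlinarith [sq_nonneg ν]
  have habs2 : |2 * (1 - α) * x * ν| ≤ 2 * C * B := by
    have : |2 * (1 - α) * x * ν| = 2 * (1 - α) * |x| * |ν| := by
      rw [abs_mul, abs_mul, abs_mul]
      rw [abs_of_nonneg h1a, abs_of_nonneg (by norm_num : (0:ℝ) ≤ 2)]
    rw [this]
    have h1 : 2 * (1 - α) * |x| ≤ 2 * C := by nlinarith [abs_nonneg x]
    nlinarith [abs_nonneg ν, abs_nonneg x]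
  have hin : |(1 - α) ^ 2 * ν ^ 2 - 2 * (1 - α) * x * ν| ≤ B ^ 2 + 2 * C * B :=
    le_trans (abs_sub _ _) (add_le_add habs1 habs2)
  rw [abs_mul, abs_neg, abs_of_nonneg (by positivity : (0:ℝ) ≤ 1 / (2 * α ^ 2))]
  calc 1 / (2 * α ^ 2) * |(1 - α) ^ 2 * ν ^ 2 - 2 * (1 - α) * x * ν|
      ≤ 2 * (B ^ 2 + 2 * C * B) :=
    mul_le_mul hinv hin (abs_nonneg _) (by norm_num)

lemma Hfun_bounds {B C : ℝ} {q : ℝ → ℝ} (hq_meas : Measurable q)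
    (hq_nonneg : ∀ x, 0 ≤ q x) (hq_one : ∫ x, q x = 1)
    (hq_supp : Function.support q ⊆ Set.Icc (-B) B) (hq_int : Integrable q)
    {α x : ℝ} (hα : α ∈ Set.Ioo (1/2 : ℝ) 1) (hx : |x| ≤ C) :
    Real.exp (-(2 * (B ^ 2 + 2 * C * B))) ≤ Hfun q α x ∧
      Hfun q α x ≤ Real.exp (2 * (B ^ 2 + 2 * C * B)) := by
  set M := 2 * (B ^ 2 + 2 * C * B) with hM
  set g : ℝ → ℝ := fun ν =>
    Real.exp (-(1 / (2 * α ^ 2)) * ((1 - α) ^ 2 * ν ^ 2 - 2 * (1 - α) * x * ν)) * q ν with hg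
  have hg_meas : Measurable g := by
    apply Measurable.mul _ hq_meas
    exact Real.measurable_exp.comp (by fun_prop)
  have hub : ∀ ν, g ν ≤ Real.exp M * q ν := by
    intro ν
    rcases eq_or_ne (q ν) 0 with h | h
    · simp [hg, h]
    · have hν : |ν| ≤ B := abs_le.2 ⟨(hq_supp h).1, (hq_supp h).2⟩
      have := expo_abs_le hα hx hν
      have he : -(1 / (2 * α ^ 2)) * ((1 - α) ^ 2 * ν ^ 2 - 2 * (1 - α) * x * ν) ≤ M :=
        le_trans (le_abs_self _) this
      exact mul_le_mul_of_nonneg_right (Real.exp_le_exp.2 he) (hq_nonneg ν)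
  have hlb : ∀ ν, Real.exp (-M) * q ν ≤ g ν := by
    intro ν
    rcases eq_or_ne (q ν) 0 with h | h
    · simp [hg, h]
    · have hν : |ν| ≤ B := abs_le.2 ⟨(hq_supp h).1, (hq_supp h).2⟩
      have := expo_abs_le hα hx hν
      have he : -M ≤ -(1 / (2 * α ^ 2)) * ((1 - α) ^ 2 * ν ^ 2 - 2 * (1 - α) * x * ν) :=
        neg_le_of_abs_le this
      exact mul_le_mul_of_nonneg_right (Real.exp_le_exp.2 he) (hq_nonneg ν)
  have hg_nonneg : ∀ ν, 0 ≤ g ν := fun ν => mul_nonneg (Real.exp_pos _).le (hq_nonneg ν)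
  have hg_int : Integrable g := by
    refine (hq_int.const_mul (Real.exp M)).mono hg_meas.aestronglyMeasurable ?_
    filter_upwards with ν
    rw [Real.norm_eq_abs, Real.norm_eq_abs, abs_of_nonneg (hg_nonneg ν),
      abs_of_nonneg (mul_nonneg (Real.exp_pos _).le (hq_nonneg ν))]
    exact hub ν
  constructor
  · have h1 : ∫ ν, Real.exp (-M) * q ν ≤ ∫ ν, g ν :=
      integral_mono (hq_int.const_mul _) hg_int hlb
    rwa [integral_const_mul, hq_one, mul_one] at h1
  · have h1 : ∫ ν, g ν ≤ ∫ ν, Real.exp M * q ν :=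
      integral_mono hg_int (hq_int.const_mul _) hub
    rwa [integral_const_mul, hq_one, mul_one] at h1

set_option maxHeartbeats 1000000 in
/-- If `q` is a probability density supported in `[-B,B]` and `p_T` a bounded probability
density supported in `[-C,C]`, then `∫ p_T log(p_T/ω_α) → ∫ p_T log(p_T/ρ)` as `α → 1⁻`. -/
theorem statement13 (B C K : ℝ) (hB : 0 < B) (hC : 0 < C)
    (q : ℝ → ℝ) (hq_meas : Measurable q) (hq_nonneg : ∀ x, 0 ≤ q x)
    (hq_one : ∫ x, q x = 1) (hq_supp : Function.support q ⊆ Set.Icc (-B) B)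
    (pT : ℝ → ℝ) (hpT_meas : Measurable pT) (hpT_nonneg : ∀ x, 0 ≤ pT x)
    (hpT_one : ∫ x, pT x = 1) (hpT_supp : Function.support pT ⊆ Set.Icc (-C) C)
    (hpT_bdd : ∀ x, pT x ≤ K) :
    Tendsto (fun α : ℝ => ∫ x : ℝ, pT x * Real.log (pT x / omegaFun q α x))
      (nhdsWithin 1 (Set.Iio 1))
      (nhds (∫ x : ℝ, pT x * Real.log (pT x / stdGaussianDensity x))) := by
  have hq_int : Integrable q := by
    by_contra h
    rw [integral_undef h] at hq_one
    norm_num at hq_one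
  set M := 2 * (B ^ 2 + 2 * C * B) with hM
  have hK0 : 0 < K := by
    by_contra h
    push_neg at h
    have hz : ∀ x, pT x = 0 := fun x => le_antisymm (le_trans (hpT_bdd x) h) (hpT_nonneg x)
    rw [show (fun x => pT x) = (fun _ => (0:ℝ)) from funext hz] at hpT_one
    simp at hpT_one
  -- constants for the ω bounds
  set c : ℝ := (Real.sqrt (2 * Real.pi))⁻¹ * Real.exp (-(2 * C ^ 2)) * Real.exp (-M) with hc
  set c' : ℝ := 2 * (Real.sqrt (2 * Real.pi))⁻¹ * Real.exp M with hc'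
  have hsqrt : 0 < Real.sqrt (2 * Real.pi) := Real.sqrt_pos.2 (by positivity)
  have hc0 : 0 < c := by positivity
  have hc'0 : 0 < c' := by positivity
  set L : ℝ := |Real.log c| + |Real.log c'| with hL
  have hL0 : 0 ≤ L := add_nonneg (abs_nonneg _) (abs_nonneg _)
  set D : ℝ := 1 + K * |Real.log K| + K * L with hD
  have hD0 : 0 ≤ D := by positivity
  -- ω bounds on the relevant region
  have homega_bounds : ∀ α ∈ Set.Ioo (1/2 : ℝ) 1, ∀ x ∈ Set.Icc (-C) C,
      c ≤ omegaFun q α x ∧ omegaFun q α x ≤ c' := by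
    intro α hα x hx
    obtain ⟨hα1, hα2⟩ := hα
    have hα0 : (0:ℝ) < α := by linarith
    have hxC : |x| ≤ C := abs_le.2 ⟨hx.1, hx.2⟩
    obtain ⟨hH1, hH2⟩ := Hfun_bounds hq_meas hq_nonneg hq_one hq_supp hq_int ⟨hα1, hα2⟩ hxC
    have hHpos : 0 < Hfun q α x := lt_of_lt_of_le (Real.exp_pos _) hH1
    have h1α : (1:ℝ) ≤ 1 / α := by
      rw [le_div_iff₀ hα0]; linarith
    have h2α : 1 / α ≤ 2 := by
      rw [div_le_iff₀ hα0]; linarith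
    have hxα : (x / α) ^ 2 ≤ (2 * C) ^ 2 := by
      have : |x / α| ≤ 2 * C := by
        rw [abs_div, abs_of_pos hα0, div_le_iff₀ hα0]
        nlinarith [abs_nonneg x]
      nlinarith [abs_nonneg (x / α), sq_abs (x / α)]
    have hρlb : (Real.sqrt (2 * Real.pi))⁻¹ * Real.exp (-(2 * C ^ 2)) ≤
        stdGaussianDensity (x / α) := by
      unfold stdGaussianDensity
      have : Real.exp (-(2 * C ^ 2)) ≤ Real.exp (-(x / α) ^ 2 / 2) := by
        apply Real.exp_le_exp.2; nlinarith
      exact mul_le_mul_of_nonneg_left this (by positivity)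
    constructor
    · calc c = 1 * ((Real.sqrt (2 * Real.pi))⁻¹ * Real.exp (-(2 * C ^ 2))) * Real.exp (-M) := by
            rw [hc]; ring
        _ ≤ omegaFun q α x := by
            unfold omegaFun
            apply mul_le_mul
            · exact mul_le_mul h1α hρlb (by positivity) (one_div_pos.2 hα0).le
            · exact hH1
            · exact (Real.exp_pos _).le
            · exact mul_nonneg (one_div_pos.2 hα0).le (stdGaussianDensity_pos _).le
    · calc omegaFun q α x ≤ 2 * (Real.sqrt (2 * Real.pi))⁻¹ * Real.exp M := by
            unfold omegaFun
            apply mul_le_mul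
            · exact mul_le_mul h2α (stdGaussianDensity_le _) (stdGaussianDensity_pos _).le
                (by norm_num)
            · exact hH2
            · exact hHpos.le
            · positivity
        _ = c' := rfl
  -- measurability of x ↦ ω_α x
  have homega_meas : ∀ α : ℝ, Measurable (fun x => omegaFun q α x) := by
    intro α
    have hHm : Measurable (Hfun q α) := by
      have hsm : StronglyMeasurable (fun p : ℝ × ℝ =>
          Real.exp (-(1 / (2 * α ^ 2)) * ((1 - α) ^ 2 * p.2 ^ 2 - 2 * (1 - α) * p.1 * p.2))
            * q p.2) := by
        apply Measurable.stronglyMeasurable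
        apply Measurable.mul _ (hq_meas.comp measurable_snd)
        exact Real.measurable_exp.comp (by fun_prop)
      exact hsm.integral_prod_right'.measurable
    unfold omegaFun
    apply Measurable.mul _ hHm
    apply Measurable.mul measurable_const
    unfold stdGaussianDensity
    fun_prop
  -- main dominated convergence
  apply tendsto_integral_filter_of_dominated_convergence
    (bound := Set.indicator (Set.Icc (-C) C) (fun _ => D))
  · filter_upwards with α
    exact (hpT_meas.mul ((hpT_meas.div (homega_meas α)).log)).aestronglyMeasurable
  · filter_upwards [Ioo_mem_nhdsLT_of_mem (by norm_num : (1:ℝ) ∈ Set.Ioc (1/2 : ℝ) 1)]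
      with α hα
    filter_upwards with x
    by_cases hx : x ∈ Set.Icc (-C) C
    · rw [Set.indicator_of_mem hx]
      rcases eq_or_lt_of_le (hpT_nonneg x) with hp0 | hp0
      · rw [← hp0]; simpa using hD0
      · obtain ⟨hω1, hω2⟩ := homega_bounds α hα x hx
        have hωpos : 0 < omegaFun q α x := lt_of_lt_of_le hc0 hω1
        have hlogω : |Real.log (omegaFun q α x)| ≤ L := by
          rw [abs_le]
          constructor
          · have := Real.log_le_log hc0 hω1
            have h2 : -|Real.log c| ≤ Real.log c := neg_abs_le _
            rw [hL]; linarith [abs_nonneg (Real.log c), abs_nonneg (Real.log c')]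
          · have := Real.log_le_log hωpos hω2
            have h2 : Real.log c' ≤ |Real.log c'| := le_abs_self _
            rw [hL]; linarith [abs_nonneg (Real.log c), abs_nonneg (Real.log c')]
        have hlogp : pT x * |Real.log (pT x)| ≤ 1 + K * |Real.log K| := by
          rcases le_or_gt (pT x) 1 with h1 | h1
          · have := Real.abs_log_mul_self_lt (pT x) hp0 h1
            have h2 : pT x * |Real.log (pT x)| = |Real.log (pT x) * pT x| := by
              rw [abs_mul, abs_of_pos hp0]; ring
            have h3 : (0:ℝ) ≤ K * |Real.log K| := by positivity
            linarith [h2 ▸ this.le]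
          · have hlogpos : 0 ≤ Real.log (pT x) := Real.log_nonneg h1.le
            have hK1 : 1 < K := lt_of_lt_of_le h1 (hpT_bdd x)
            have h2 : Real.log (pT x) ≤ Real.log K := Real.log_le_log hp0 (hpT_bdd x)
            have h3 : pT x * Real.log (pT x) ≤ K * Real.log K := by
              apply mul_le_mul (hpT_bdd x) h2 hlogpos (by linarith)
            rw [abs_of_nonneg hlogpos]
            have h4 : Real.log K ≤ |Real.log K| := le_abs_self _
            nlinarith
        rw [norm_mul, Real.norm_eq_abs, Real.norm_eq_abs, abs_of_pos hp0,
          Real.log_div hp0.ne' hωpos.ne']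
        calc pT x * |Real.log (pT x) - Real.log (omegaFun q α x)|
            ≤ pT x * (|Real.log (pT x)| + |Real.log (omegaFun q α x)|) := by
              apply mul_le_mul_of_nonneg_left (abs_sub _ _) hp0.le
          _ = pT x * |Real.log (pT x)| + pT x * |Real.log (omegaFun q α x)| := by ring
          _ ≤ (1 + K * |Real.log K|) + K * L := by
              apply add_le_add hlogp
              apply mul_le_mul (hpT_bdd x) hlogω (abs_nonneg _) hK0.le
          _ = D := by rw [hD]
    · have hp0 : pT x = 0 := Function.notMem_support.1 (fun h => hx (hpT_supp h))
      simp [Set.indicator_of_notMem hx, hp0]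
  · exact (integrable_indicator_iff measurableSet_Icc).2
      (integrableOn_const measure_Icc_lt_top.ne)
  · filter_upwards with x
    rcases eq_or_lt_of_le (hpT_nonneg x) with hp0 | hp0
    · rw [← hp0]; simp [tendsto_const_nhds]
    · have hxC : |x| ≤ C := by
        have hmem : x ∈ Set.Icc (-C) C := hpT_supp (Function.mem_support.2 hp0.ne')
        exact abs_le.2 ⟨hmem.1, hmem.2⟩
      -- H(α,x) → 1
      have hH : Tendsto (fun α => Hfun q α x) (nhdsWithin 1 (Set.Iio 1)) (nhds 1) := by
        have h1 : (nhds (1:ℝ)) = nhds (∫ ν : ℝ, q ν) := by rw [hq_one]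
        rw [h1]
        apply tendsto_integral_filter_of_dominated_convergence
          (bound := fun ν => Real.exp M * q ν)
        · filter_upwards with α
          apply Measurable.aestronglyMeasurable
          apply Measurable.mul _ hq_meas
          exact Real.measurable_exp.comp (by fun_prop)
        · filter_upwards [Ioo_mem_nhdsLT_of_mem (by norm_num : (1:ℝ) ∈ Set.Ioc (1/2 : ℝ) 1)]
            with α hα
          filter_upwards with ν
          rcases eq_or_ne (q ν) 0 with h | h
          · simp [h]
          · have hν : |ν| ≤ B := abs_le.2 ⟨(hq_supp h).1, (hq_supp h).2⟩
            have he := expo_abs_le hα hxC hν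
            rw [norm_mul, Real.norm_eq_abs, Real.norm_eq_abs, abs_of_nonneg (hq_nonneg ν),
              Real.abs_exp]
            exact mul_le_mul_of_nonneg_right
              (Real.exp_le_exp.2 (le_trans (le_abs_self _) he)) (hq_nonneg ν)
        · exact hq_int.const_mul _
        · filter_upwards with ν
          have hcont : ContinuousAt (fun α : ℝ =>
              Real.exp (-(1 / (2 * α ^ 2)) * ((1 - α) ^ 2 * ν ^ 2 - 2 * (1 - α) * x * ν))
                * q ν) 1 := by
            apply ContinuousAt.mul _ continuousAt_const
            apply Real.continuous_exp.continuousAt.comp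
            apply ContinuousAt.mul
            · apply ContinuousAt.neg
              exact ContinuousAt.div continuousAt_const (by fun_prop) (by norm_num)
            · fun_prop
          have := hcont.tendsto.mono_left (nhdsWithin_le_nhds (s := Set.Iio (1:ℝ)))
          simpa using this
      -- (1/α) ρ(x/α) → ρ(x)
      have hg : Tendsto (fun α : ℝ => (1 / α) * stdGaussianDensity (x / α))
          (nhdsWithin 1 (Set.Iio 1)) (nhds (stdGaussianDensity x)) := by
        have hsd : Continuous stdGaussianDensity := by
          unfold stdGaussianDensity; fun_prop
        have hd1 : ContinuousAt (fun α : ℝ => 1 / α) 1 :=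
          continuousAt_const.div continuousAt_id one_ne_zero
        have hd2 : ContinuousAt (fun α : ℝ => x / α) 1 :=
          continuousAt_const.div continuousAt_id one_ne_zero
        have hcont : ContinuousAt (fun α : ℝ => (1 / α) * stdGaussianDensity (x / α)) 1 :=
          hd1.mul (hsd.continuousAt.comp hd2)
        have := hcont.tendsto.mono_left (nhdsWithin_le_nhds (s := Set.Iio (1:ℝ)))
        simpa using this
      have hω : Tendsto (fun α => omegaFun q α x) (nhdsWithin 1 (Set.Iio 1))
          (nhds (stdGaussianDensity x)) := by
        have := hg.mul hH
        simpa [omegaFun] using this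
      have hρ0 : stdGaussianDensity x ≠ 0 := (stdGaussianDensity_pos x).ne'
      have hdiv : Tendsto (fun α => pT x / omegaFun q α x) (nhdsWithin 1 (Set.Iio 1))
          (nhds (pT x / stdGaussianDensity x)) := tendsto_const_nhds.div hω hρ0
      have hlog := (Real.continuousAt_log (div_ne_zero hp0.ne' hρ0)).tendsto.comp hdiv
      exact tendsto_const_nhds.mul hlog
end

section
/- Let B > 0 and let μ be a Borel probability measure on ℝ whose support is contained in [−B,B]. For β ∈ (0,1) define μ_β as the convolution of the pushforward of μ under x ↦ βx with the centered Gaussian measure of variance 1−β². Then KL(μ_β ‖ N(0,1)) → 0 as β → 0 from the right, where N(0,1) is the standard Gaussian measure on ℝ and KL denotes the Kullback–Leibler divergence. -/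
open MeasureTheory Real Filter ProbabilityTheory
open scoped ENNReal Topology
open scoped NNReal

open Classical in
/-- The Kullback–Leibler divergence `KL(μ‖ν)`, as an element of `ℝ≥0∞`: it equals
`∫ log(dμ/dν) dμ` when `μ ≪ ν` and this integral is well defined, and `∞` otherwise. -/
noncomputable def klDivergence (μ ν : Measure ℝ) : ℝ≥0∞ :=
  if μ ≪ ν ∧ Integrable (llr μ ν) μ then ENNReal.ofReal (∫ x, llr μ ν x ∂μ) else ⊤

/-- For `β ∈ (0,1)`, the law of `βX + √(1-β²)·ε` for `X ∼ μ` independent of a standard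
Gaussian `ε`: the convolution of the pushforward of `μ` under `x ↦ βx` with the centered
Gaussian of variance `1-β²`. -/
noncomputable def muBeta (μ : Measure ℝ) (β : ℝ) : Measure ℝ :=
  Measure.map (fun p : ℝ × ℝ => p.1 + p.2)
    ((Measure.map (fun x : ℝ => β * x) μ).prod
      (gaussianReal 0 (Real.toNNReal (1 - β ^ 2))))


-- pdf ratio bounds
lemma pdf_upper {B β x : ℝ} (hβ0 : 0 < β) (hβ1 : β < 1) (hx : |x| ≤ B) (y : ℝ) :
    gaussianPDFReal (β * x) (Real.toNNReal (1 - β ^ 2)) y ≤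
      gaussianPDFReal 0 1 y * ((Real.sqrt (1 - β ^ 2))⁻¹ *
        Real.exp (β * B * |y| / (1 - β ^ 2))) := by
  have hv : 0 < 1 - β ^ 2 := by nlinarith
  have hco : ((Real.toNNReal (1 - β ^ 2)) : ℝ) = 1 - β ^ 2 := Real.coe_toNNReal _ hv.le
  unfold gaussianPDFReal
  rw [hco]
  have h2π : (0:ℝ) < 2 * π := by positivity
  have hsq : Real.sqrt (2 * π * (1 - β^2)) = Real.sqrt (2*π) * Real.sqrt (1-β^2) :=
    Real.sqrt_mul h2π.le _
  have hxy : x * y ≤ B * |y| := by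
    calc x * y ≤ |x * y| := le_abs_self _
    _ = |x| * |y| := abs_mul _ _
    _ ≤ B * |y| := mul_le_mul_of_nonneg_right hx (abs_nonneg y)
  have key : -(y - β*x)^2 / (2*(1-β^2)) ≤ -(y-0)^2/(2*((1:ℝ≥0):ℝ)) + β*B*|y|/(1-β^2) := by
    have expand : -(y-0)^2/(2*((1:ℝ≥0):ℝ)) + β*B*|y|/(1-β^2) - (-(y - β*x)^2 / (2*(1-β^2)))
        = ((y-β*x)^2 - (1-β^2)*y^2 + 2*β*B*|y|) / (2*(1-β^2)) := by
      push_cast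
      field_simp
      ring
    have hnum : 0 ≤ (y-β*x)^2 - (1-β^2)*y^2 + 2*β*B*|y| := by nlinarith [sq_nonneg (β*x), sq_nonneg (β*y)]
    have := div_nonneg hnum (by positivity : (0:ℝ) ≤ 2*(1-β^2))
    linarith [expand ▸ this]
  calc (√(2 * π * (1 - β ^ 2)))⁻¹ * rexp (-(y - β*x)^2 / (2 * (1-β^2)))
      = (√(2*π))⁻¹ * (√(1-β^2))⁻¹ * rexp (-(y - β*x)^2 / (2 * (1-β^2))) := by
        rw [hsq, mul_inv]
    _ ≤ (√(2*π))⁻¹ * (√(1-β^2))⁻¹ * rexp (-(y-0)^2/(2*((1:ℝ≥0):ℝ)) + β*B*|y|/(1-β^2)) := by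
        apply mul_le_mul_of_nonneg_left _ (by positivity)
        exact Real.exp_le_exp.mpr key
    _ = (√(2 * π * ((1:ℝ≥0):ℝ)))⁻¹ * rexp (-(y - 0) ^ 2 / (2 * ((1:ℝ≥0):ℝ))) *
          ((√(1 - β ^ 2))⁻¹ * rexp (β * B * |y| / (1 - β ^ 2))) := by
        rw [Real.exp_add]
        push_cast
        rw [mul_one]
        ring

lemma pdf_lower {B β x : ℝ} (hβ0 : 0 < β) (hβ1 : β < 1) (hx : |x| ≤ B) (y : ℝ) :
    gaussianPDFReal 0 1 y * ((Real.sqrt (1 - β ^ 2))⁻¹ *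
        Real.exp (-(2*β*B*|y| + β^2*y^2 + β^2*B^2) / (2*(1 - β ^ 2)))) ≤
      gaussianPDFReal (β * x) (Real.toNNReal (1 - β ^ 2)) y := by
  have hv : 0 < 1 - β ^ 2 := by nlinarith
  have hco : ((Real.toNNReal (1 - β ^ 2)) : ℝ) = 1 - β ^ 2 := Real.coe_toNNReal _ hv.le
  unfold gaussianPDFReal
  rw [hco]
  have h2π : (0:ℝ) < 2 * π := by positivity
  have hsq : Real.sqrt (2 * π * (1 - β^2)) = Real.sqrt (2*π) * Real.sqrt (1-β^2) :=
    Real.sqrt_mul h2π.le _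
  have hxy : -(B * |y|) ≤ x * y := by
    have : -(x*y) ≤ B * |y| := by
      calc -(x*y) ≤ |x * y| := neg_le_abs _
      _ = |x| * |y| := abs_mul _ _
      _ ≤ B * |y| := mul_le_mul_of_nonneg_right hx (abs_nonneg y)
    linarith
  have hx2 : x^2 ≤ B^2 := by
    have := abs_nonneg x
    nlinarith [sq_abs x]
  have key : -(y-0)^2/(2*((1:ℝ≥0):ℝ)) + (-(2*β*B*|y| + β^2*y^2 + β^2*B^2) / (2*(1-β^2)))
      ≤ -(y - β*x)^2 / (2*(1-β^2)) := by
    have expand : -(y - β*x)^2 / (2*(1-β^2)) -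
        (-(y-0)^2/(2*((1:ℝ≥0):ℝ)) + (-(2*β*B*|y| + β^2*y^2 + β^2*B^2) / (2*(1-β^2))))
        = ((1-β^2)*y^2 - (y-β*x)^2 + 2*β*B*|y| + β^2*y^2 + β^2*B^2) / (2*(1-β^2)) := by
      push_cast
      field_simp
      ring
    have hnum : 0 ≤ (1-β^2)*y^2 - (y-β*x)^2 + 2*β*B*|y| + β^2*y^2 + β^2*B^2 := by
      nlinarith [sq_nonneg (β*y)]
    have := div_nonneg hnum (by positivity : (0:ℝ) ≤ 2*(1-β^2))
    linarith [expand ▸ this]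
  calc (√(2 * π * ((1:ℝ≥0):ℝ)))⁻¹ * rexp (-(y - 0) ^ 2 / (2 * ((1:ℝ≥0):ℝ))) *
          ((√(1 - β ^ 2))⁻¹ * rexp (-(2*β*B*|y| + β^2*y^2 + β^2*B^2) / (2*(1 - β ^ 2))))
      = (√(2*π))⁻¹ * (√(1-β^2))⁻¹ *
          rexp (-(y-0)^2/(2*((1:ℝ≥0):ℝ)) + (-(2*β*B*|y| + β^2*y^2 + β^2*B^2) / (2*(1-β^2)))) := by
        rw [Real.exp_add]
        push_cast
        rw [mul_one]
        ring
    _ ≤ (√(2*π))⁻¹ * (√(1-β^2))⁻¹ * rexp (-(y - β*x)^2 / (2 * (1-β^2))) := by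
        apply mul_le_mul_of_nonneg_left _ (by positivity)
        exact Real.exp_le_exp.mpr key
    _ = (√(2 * π * (1-β^2)))⁻¹ * rexp (-(y - β*x)^2 / (2 * (1-β^2))) := by
        rw [hsq, mul_inv]

lemma gaussianPDF_jointly_measurable (v : ℝ≥0) :
    Measurable (fun q : ℝ × ℝ => gaussianPDF q.1 v q.2) := by
  apply ENNReal.measurable_ofReal.comp
  have : Continuous (fun q : ℝ × ℝ => gaussianPDFReal q.1 v q.2) := by
    unfold gaussianPDFReal
    fun_prop
  exact this.measurable

set_option maxHeartbeats 1000000 in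
lemma muBeta_eq_withDensity (μ : Measure ℝ) [IsProbabilityMeasure μ] {β : ℝ}
    (hv : Real.toNNReal (1 - β ^ 2) ≠ 0) :
    muBeta μ β = volume.withDensity
      (fun y => ∫⁻ x, gaussianPDF (β * x) (Real.toNNReal (1 - β ^ 2)) y ∂μ) := by
  set v := Real.toNNReal (1 - β ^ 2) with hvdef
  have hjm := gaussianPDF_jointly_measurable v
  have hmul : Measurable (fun x : ℝ => β * x) := measurable_const_mul β
  ext s hs
  rw [muBeta, Measure.map_apply measurable_add hs,
    Measure.prod_apply (measurable_add hs)]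
  have hfiber : ∀ a : ℝ, (gaussianReal 0 v) (Prod.mk a ⁻¹' ((fun p : ℝ × ℝ => p.1 + p.2) ⁻¹' s))
      = ∫⁻ y in s, gaussianPDF a v y := by
    intro a
    have h1 : (Prod.mk a ⁻¹' ((fun p : ℝ × ℝ => p.1 + p.2) ⁻¹' s)) = (fun b => a + b) ⁻¹' s := rfl
    rw [h1, ← Measure.map_apply (measurable_const_add a) hs, gaussianReal_map_const_add,
      zero_add, gaussianReal_apply a hv s]
  simp_rw [← hvdef, hfiber]
  rw [lintegral_lintegral_swap]
  swap
  · exact hjm.aemeasurable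
  rw [withDensity_apply _ hs]
  refine lintegral_congr fun y => ?_
  have hm1 : Measurable (fun x : ℝ => gaussianPDF x v y) := by
    apply ENNReal.measurable_ofReal.comp
    have hc : Continuous (fun x : ℝ => gaussianPDFReal x v y) := by
      unfold gaussianPDFReal; fun_prop
    exact hc.measurable
  exact lintegral_map hm1 hmul

-- the density of muBeta with respect to the standard gaussian
noncomputable def hRatio (μ : Measure ℝ) (β : ℝ) (y : ℝ) : ℝ≥0∞ :=
  (∫⁻ x, gaussianPDF (β * x) (Real.toNNReal (1 - β ^ 2)) y ∂μ) / gaussianPDF 0 1 y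

lemma measurable_qDens (μ : Measure ℝ) [SFinite μ] (β : ℝ) :
    Measurable (fun y => ∫⁻ x, gaussianPDF (β * x) (Real.toNNReal (1 - β ^ 2)) y ∂μ) := by
  have hjm : Measurable (fun q : ℝ × ℝ => gaussianPDF (β * q.2) (Real.toNNReal (1 - β ^ 2)) q.1) := by
    apply ENNReal.measurable_ofReal.comp
    have : Continuous (fun q : ℝ × ℝ =>
        gaussianPDFReal (β * q.2) (Real.toNNReal (1 - β ^ 2)) q.1) := by
      unfold gaussianPDFReal; fun_prop
    exact this.measurable
  exact hjm.lintegral_prod_right'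

lemma measurable_hRatio (μ : Measure ℝ) [SFinite μ] (β : ℝ) : Measurable (hRatio μ β) :=
  (measurable_qDens μ β).div (measurable_gaussianPDF 0 1)

lemma muBeta_eq_withDensity_gaussian (μ : Measure ℝ) [IsProbabilityMeasure μ] {β : ℝ}
    (hv : Real.toNNReal (1 - β ^ 2) ≠ 0) :
    muBeta μ β = (gaussianReal 0 1).withDensity (hRatio μ β) := by
  rw [muBeta_eq_withDensity μ hv, gaussianReal_of_var_ne_zero 0 one_ne_zero,
    ← withDensity_mul _ (measurable_gaussianPDF 0 1) (measurable_hRatio μ β)]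
  congr 1
  funext y
  simp only [Pi.mul_apply, hRatio]
  rw [ENNReal.mul_div_cancel (gaussianPDF_pos 0 one_ne_zero y).ne'
    ENNReal.ofReal_ne_top]

lemma muBeta_ac (μ : Measure ℝ) [IsProbabilityMeasure μ] {β : ℝ}
    (hv : Real.toNNReal (1 - β ^ 2) ≠ 0) :
    muBeta μ β ≪ gaussianReal 0 1 := by
  rw [muBeta_eq_withDensity_gaussian μ hv]
  exact withDensity_absolutelyContinuous _ _

lemma muBeta_rnDeriv (μ : Measure ℝ) [IsProbabilityMeasure μ] {β : ℝ}
    (hv : Real.toNNReal (1 - β ^ 2) ≠ 0) :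
    (muBeta μ β).rnDeriv (gaussianReal 0 1) =ᵐ[gaussianReal 0 1] hRatio μ β := by
  rw [muBeta_eq_withDensity_gaussian μ hv]
  exact Measure.rnDeriv_withDensity _ (measurable_hRatio μ β)

lemma ae_abs_le {B : ℝ} {μ : Measure ℝ} (hsupp : μ (Set.Icc (-B) B)ᶜ = 0) :
    ∀ᵐ x ∂μ, |x| ≤ B := by
  have h : ∀ᵐ x ∂μ, x ∈ Set.Icc (-B) B := by
    rw [MeasureTheory.ae_iff]
    convert hsupp using 2
    rfl
  exact h.mono fun x hx => abs_le.mpr ⟨hx.1, hx.2⟩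

lemma hRatio_le {B β : ℝ} (μ : Measure ℝ) [IsProbabilityMeasure μ] (hβ0 : 0 < β) (hβ1 : β < 1)
    (hsupp : μ (Set.Icc (-B) B)ᶜ = 0) (y : ℝ) :
    hRatio μ β y ≤ ENNReal.ofReal ((Real.sqrt (1 - β ^ 2))⁻¹ *
      Real.exp (β * B * |y| / (1 - β ^ 2))) := by
  have hv : 0 < 1 - β ^ 2 := by nlinarith
  have hφr : 0 < gaussianPDFReal 0 1 y := gaussianPDFReal_pos 0 1 y one_ne_zero
  have hq : (∫⁻ x, gaussianPDF (β * x) (Real.toNNReal (1 - β ^ 2)) y ∂μ) ≤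
      ENNReal.ofReal (gaussianPDFReal 0 1 y * ((Real.sqrt (1 - β ^ 2))⁻¹ *
        Real.exp (β * B * |y| / (1 - β ^ 2)))) := by
    calc (∫⁻ x, gaussianPDF (β * x) (Real.toNNReal (1 - β ^ 2)) y ∂μ)
        ≤ ∫⁻ _, ENNReal.ofReal (gaussianPDFReal 0 1 y * ((Real.sqrt (1 - β ^ 2))⁻¹ *
            Real.exp (β * B * |y| / (1 - β ^ 2)))) ∂μ := by
          refine lintegral_mono_ae ((ae_abs_le hsupp).mono fun x hx => ?_)
          exact ENNReal.ofReal_le_ofReal (pdf_upper hβ0 hβ1 hx y)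
      _ = _ := by rw [lintegral_const, measure_univ, mul_one]
  calc hRatio μ β y
      ≤ ENNReal.ofReal (gaussianPDFReal 0 1 y * ((Real.sqrt (1 - β ^ 2))⁻¹ *
          Real.exp (β * B * |y| / (1 - β ^ 2)))) / gaussianPDF 0 1 y :=
        ENNReal.div_le_div_right hq _
    _ = _ := by
        rw [ENNReal.ofReal_mul hφr.le]
        show ENNReal.ofReal (gaussianPDFReal 0 1 y) * _ / ENNReal.ofReal (gaussianPDFReal 0 1 y) = _
        rw [mul_comm, mul_div_assoc, ENNReal.div_self (by
            simpa [gaussianPDF] using (gaussianPDF_pos 0 one_ne_zero y).ne')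
          ENNReal.ofReal_ne_top, mul_one]

lemma le_hRatio {B β : ℝ} (μ : Measure ℝ) [IsProbabilityMeasure μ] (hβ0 : 0 < β) (hβ1 : β < 1)
    (hsupp : μ (Set.Icc (-B) B)ᶜ = 0) (y : ℝ) :
    ENNReal.ofReal ((Real.sqrt (1 - β ^ 2))⁻¹ *
        Real.exp (-(2*β*B*|y| + β^2*y^2 + β^2*B^2) / (2*(1 - β ^ 2)))) ≤ hRatio μ β y := by
  have hv : 0 < 1 - β ^ 2 := by nlinarith
  have hφr : 0 < gaussianPDFReal 0 1 y := gaussianPDFReal_pos 0 1 y one_ne_zero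
  have hq : ENNReal.ofReal (gaussianPDFReal 0 1 y * ((Real.sqrt (1 - β ^ 2))⁻¹ *
        Real.exp (-(2*β*B*|y| + β^2*y^2 + β^2*B^2) / (2*(1 - β ^ 2))))) ≤
      (∫⁻ x, gaussianPDF (β * x) (Real.toNNReal (1 - β ^ 2)) y ∂μ) := by
    calc ENNReal.ofReal (gaussianPDFReal 0 1 y * ((Real.sqrt (1 - β ^ 2))⁻¹ *
          Real.exp (-(2*β*B*|y| + β^2*y^2 + β^2*B^2) / (2*(1 - β ^ 2)))))
        = ∫⁻ _, ENNReal.ofReal (gaussianPDFReal 0 1 y * ((Real.sqrt (1 - β ^ 2))⁻¹ *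
            Real.exp (-(2*β*B*|y| + β^2*y^2 + β^2*B^2) / (2*(1 - β ^ 2))))) ∂μ := by
          rw [lintegral_const, measure_univ, mul_one]
      _ ≤ _ := by
          refine lintegral_mono_ae ((ae_abs_le hsupp).mono fun x hx => ?_)
          exact ENNReal.ofReal_le_ofReal (pdf_lower hβ0 hβ1 hx y)
  have h0 : gaussianPDF 0 1 y ≠ 0 := (gaussianPDF_pos 0 one_ne_zero y).ne'
  have htop : gaussianPDF 0 1 y ≠ ⊤ := by
    simp only [gaussianPDF]; exact ENNReal.ofReal_ne_top
  rw [hRatio, ENNReal.le_div_iff_mul_le (Or.inl h0) (Or.inl htop)]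
  calc ENNReal.ofReal ((Real.sqrt (1 - β ^ 2))⁻¹ *
        Real.exp (-(2*β*B*|y| + β^2*y^2 + β^2*B^2) / (2*(1 - β ^ 2)))) * gaussianPDF 0 1 y
      = ENNReal.ofReal (gaussianPDFReal 0 1 y * ((Real.sqrt (1 - β ^ 2))⁻¹ *
          Real.exp (-(2*β*B*|y| + β^2*y^2 + β^2*B^2) / (2*(1 - β ^ 2))))) := by
        rw [gaussianPDF, ← ENNReal.ofReal_mul (by positivity), mul_comm]
    _ ≤ _ := hq

lemma log_hRatio_le {B β : ℝ} (μ : Measure ℝ) [IsProbabilityMeasure μ] (hβ0 : 0 < β)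
    (hβ1 : β < 1) (hsupp : μ (Set.Icc (-B) B)ᶜ = 0) (y : ℝ) :
    Real.log ((hRatio μ β y).toReal) ≤
      Real.log ((Real.sqrt (1 - β ^ 2))⁻¹) + β * B * |y| / (1 - β ^ 2) := by
  have hv : 0 < 1 - β ^ 2 := by nlinarith
  have hsp : 0 < (Real.sqrt (1 - β ^ 2))⁻¹ := by positivity
  have ht : (hRatio μ β y).toReal ≤ (Real.sqrt (1 - β ^ 2))⁻¹ *
      Real.exp (β * B * |y| / (1 - β ^ 2)) :=
    ENNReal.toReal_le_of_le_ofReal (by positivity) (hRatio_le μ hβ0 hβ1 hsupp y)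
  have hne : hRatio μ β y ≠ ⊤ :=
    ((hRatio_le μ hβ0 hβ1 hsupp y).trans_lt ENNReal.ofReal_lt_top).ne
  have hlo : (Real.sqrt (1 - β ^ 2))⁻¹ *
      Real.exp (-(2*β*B*|y| + β^2*y^2 + β^2*B^2) / (2*(1 - β ^ 2))) ≤ (hRatio μ β y).toReal :=
    (ENNReal.ofReal_le_iff_le_toReal hne).mp (le_hRatio μ hβ0 hβ1 hsupp y)
  have hpos : 0 < (hRatio μ β y).toReal := lt_of_lt_of_le (by positivity) hlo
  calc Real.log ((hRatio μ β y).toReal)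
      ≤ Real.log ((Real.sqrt (1 - β ^ 2))⁻¹ * Real.exp (β * B * |y| / (1 - β ^ 2))) :=
        Real.log_le_log hpos ht
    _ = _ := by rw [Real.log_mul hsp.ne' (Real.exp_ne_zero _), Real.log_exp]

lemma le_log_hRatio {B β : ℝ} (μ : Measure ℝ) [IsProbabilityMeasure μ] (hβ0 : 0 < β)
    (hβ1 : β < 1) (hsupp : μ (Set.Icc (-B) B)ᶜ = 0) (y : ℝ) :
    Real.log ((Real.sqrt (1 - β ^ 2))⁻¹) +
        (-(2*β*B*|y| + β^2*y^2 + β^2*B^2) / (2*(1 - β ^ 2))) ≤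
      Real.log ((hRatio μ β y).toReal) := by
  have hv : 0 < 1 - β ^ 2 := by nlinarith
  have hsp : 0 < (Real.sqrt (1 - β ^ 2))⁻¹ := by positivity
  have hne : hRatio μ β y ≠ ⊤ :=
    ((hRatio_le μ hβ0 hβ1 hsupp y).trans_lt ENNReal.ofReal_lt_top).ne
  have ht : (Real.sqrt (1 - β ^ 2))⁻¹ *
      Real.exp (-(2*β*B*|y| + β^2*y^2 + β^2*B^2) / (2*(1 - β ^ 2))) ≤ (hRatio μ β y).toReal :=
    (ENNReal.ofReal_le_iff_le_toReal hne).mp (le_hRatio μ hβ0 hβ1 hsupp y)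
  calc Real.log ((Real.sqrt (1 - β ^ 2))⁻¹) +
        (-(2*β*B*|y| + β^2*y^2 + β^2*B^2) / (2*(1 - β ^ 2)))
      = Real.log ((Real.sqrt (1 - β ^ 2))⁻¹ *
          Real.exp (-(2*β*B*|y| + β^2*y^2 + β^2*B^2) / (2*(1 - β ^ 2)))) := by
        rw [Real.log_mul hsp.ne' (Real.exp_ne_zero _), Real.log_exp]
    _ ≤ _ := Real.log_le_log (by positivity) ht

lemma abs_mul_exp_bound (x : ℝ) : |x| * Real.exp (-x^2/2) ≤ 5 * Real.exp (-(1/4) * x^2) := by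
  have h2 : |x| ≤ 1 + x^2 := by nlinarith [abs_nonneg x, sq_abs x, sq_nonneg (|x| - 1)]
  have h3 : x^2 ≤ 4 * Real.exp (x^2/4) := by nlinarith [Real.add_one_le_exp (x^2/4)]
  calc |x| * Real.exp (-x^2/2) ≤ (1 + x^2) * Real.exp (-x^2/2) :=
        mul_le_mul_of_nonneg_right h2 (Real.exp_pos _).le
    _ = Real.exp (-x^2/2) + x^2 * Real.exp (-x^2/2) := by ring
    _ ≤ Real.exp (-(1/4) * x^2) + (4 * Real.exp (x^2/4)) * Real.exp (-x^2/2) := by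
        refine add_le_add (Real.exp_le_exp.mpr (by nlinarith [sq_nonneg x])) ?_
        exact mul_le_mul_of_nonneg_right h3 (Real.exp_pos _).le
    _ = Real.exp (-(1/4) * x^2) + 4 * Real.exp (x^2/4 + -x^2/2) := by
        rw [Real.exp_add]; ring
    _ = 5 * Real.exp (-(1/4) * x^2) := by
        have : x^2/4 + -x^2/2 = -(1/4) * x^2 := by ring
        rw [this]; ring

lemma sq_mul_exp_bound (x : ℝ) : x^2 * Real.exp (-x^2/2) ≤ 4 * Real.exp (-(1/4) * x^2) := by
  have h3 : x^2 ≤ 4 * Real.exp (x^2/4) := by nlinarith [Real.add_one_le_exp (x^2/4)]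
  calc x^2 * Real.exp (-x^2/2) ≤ (4 * Real.exp (x^2/4)) * Real.exp (-x^2/2) :=
        mul_le_mul_of_nonneg_right h3 (Real.exp_pos _).le
    _ = 4 * Real.exp (x^2/4 + -x^2/2) := by rw [Real.exp_add]; ring
    _ = 4 * Real.exp (-(1/4) * x^2) := by
        have : x^2/4 + -x^2/2 = -(1/4) * x^2 := by ring
        rw [this]

lemma pdfReal_le (x : ℝ) : gaussianPDFReal 0 1 x ≤ Real.exp (-x^2/2) := by
  unfold gaussianPDFReal
  have h1 : (1:ℝ) ≤ √(2 * π * ((1:ℝ≥0):ℝ)) := by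
    rw [show ((1:ℝ≥0):ℝ) = 1 by norm_num, mul_one]
    rw [show (1:ℝ) = √1 by simp]
    exact Real.sqrt_le_sqrt (by nlinarith [Real.pi_gt_three])
  have h2 : (√(2 * π * ((1:ℝ≥0):ℝ)))⁻¹ ≤ 1 := by
    rw [inv_le_one_iff₀]; right; exact h1
  calc (√(2 * π * ((1:ℝ≥0):ℝ)))⁻¹ * rexp (-(x - 0)^2 / (2 * ((1:ℝ≥0):ℝ)))
      ≤ 1 * rexp (-(x - 0)^2 / (2 * ((1:ℝ≥0):ℝ))) :=
        mul_le_mul_of_nonneg_right h2 (Real.exp_pos _).le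
    _ = Real.exp (-x^2/2) := by
        rw [one_mul]
        congr 1
        push_cast
        ring

lemma integrable_abs_gaussian : Integrable (fun x => |x|) (gaussianReal 0 1) := by
  rw [gaussianReal_of_var_ne_zero 0 one_ne_zero,
    integrable_withDensity_iff (measurable_gaussianPDF 0 1)
      (Filter.Eventually.of_forall fun x => ENNReal.ofReal_lt_top)]
  refine Integrable.mono' ((integrable_exp_neg_mul_sq (by norm_num : (0:ℝ) < 1/4)).const_mul 5)
    ?_ (Filter.Eventually.of_forall fun x => ?_)
  · exact (continuous_abs.mul (by
      have : Continuous (fun x : ℝ => gaussianPDFReal 0 1 x) := by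
        unfold gaussianPDFReal; fun_prop
      exact this)).aestronglyMeasurable.congr (Filter.Eventually.of_forall fun x => by
        simp only [gaussianPDF]
        rw [ENNReal.toReal_ofReal (gaussianPDFReal_nonneg 0 1 x)]
        rfl)
  · rw [Real.norm_eq_abs, abs_mul, abs_abs, gaussianPDF,
      ENNReal.toReal_ofReal (gaussianPDFReal_nonneg 0 1 x),
      abs_of_nonneg (gaussianPDFReal_nonneg 0 1 x)]
    calc |x| * gaussianPDFReal 0 1 x ≤ |x| * Real.exp (-x^2/2) :=
          mul_le_mul_of_nonneg_left (pdfReal_le x) (abs_nonneg x)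
      _ ≤ 5 * Real.exp (-(1/4) * x^2) := abs_mul_exp_bound x

lemma integrable_sq_gaussian : Integrable (fun x => x^2) (gaussianReal 0 1) := by
  rw [gaussianReal_of_var_ne_zero 0 one_ne_zero,
    integrable_withDensity_iff (measurable_gaussianPDF 0 1)
      (Filter.Eventually.of_forall fun x => ENNReal.ofReal_lt_top)]
  refine Integrable.mono' ((integrable_exp_neg_mul_sq (by norm_num : (0:ℝ) < 1/4)).const_mul 4)
    ?_ (Filter.Eventually.of_forall fun x => ?_)
  · exact ((continuous_pow 2).mul (by
      have : Continuous (fun x : ℝ => gaussianPDFReal 0 1 x) := by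
        unfold gaussianPDFReal; fun_prop
      exact this)).aestronglyMeasurable.congr (Filter.Eventually.of_forall fun x => by
        simp only [gaussianPDF]
        rw [ENNReal.toReal_ofReal (gaussianPDFReal_nonneg 0 1 x)]
        rfl)
  · rw [Real.norm_eq_abs, abs_mul, abs_of_nonneg (sq_nonneg x), gaussianPDF,
      ENNReal.toReal_ofReal (gaussianPDFReal_nonneg 0 1 x),
      abs_of_nonneg (gaussianPDFReal_nonneg 0 1 x)]
    calc x^2 * gaussianPDFReal 0 1 x ≤ x^2 * Real.exp (-x^2/2) :=
          mul_le_mul_of_nonneg_left (pdfReal_le x) (sq_nonneg x)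
      _ ≤ 4 * Real.exp (-(1/4) * x^2) := sq_mul_exp_bound x

lemma moments {B β : ℝ} (μ : Measure ℝ) [IsProbabilityMeasure μ] (hβ0 : 0 < β) (hβ1 : β < 1)
    (hsupp : μ (Set.Icc (-B) B)ᶜ = 0) :
    Integrable (fun y => |y|) (muBeta μ β) ∧ Integrable (fun y => y^2) (muBeta μ β) ∧
      ∫ y, |y| ∂(muBeta μ β) ≤ β * B + ∫ x, |x| ∂(gaussianReal 0 1) := by
  have hv : 0 < 1 - β ^ 2 := by nlinarith
  set ν := Measure.map (fun x : ℝ => β * x) μ with hν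
  set G := gaussianReal 0 (Real.toNNReal (1 - β ^ 2)) with hGdef
  have : IsProbabilityMeasure ν := Measure.isProbabilityMeasure_map (measurable_const_mul β).aemeasurable
  set c := Real.sqrt (1 - β ^ 2) with hc
  have hc0 : 0 < c := Real.sqrt_pos.mpr hv
  have hc1 : c ≤ 1 := Real.sqrt_le_one.mpr (by nlinarith)
  have hG : Measure.map (fun x : ℝ => c * x) (gaussianReal 0 1) = G := by
    rw [gaussianReal_map_const_mul c, mul_zero]
    congr 1
    ext
    push_cast
    rw [mul_one, Real.sq_sqrt hv.le, Real.coe_toNNReal _ hv.le]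
  -- a.e. bound on ν
  have hae_ν : ∀ᵐ a ∂ν, |a| ≤ β * B := by
    rw [hν, ae_map_iff (measurable_const_mul β).aemeasurable
      ((isClosed_le continuous_abs continuous_const).measurableSet)]
    refine (ae_abs_le hsupp).mono fun x hx => ?_
    rw [abs_mul, abs_of_pos hβ0]
    exact mul_le_mul_of_nonneg_left hx hβ0.le
  have hfst : Measure.map Prod.fst (ν.prod G) = ν := by
    rw [Measure.map_fst_prod, measure_univ, one_smul]
  have hsnd : Measure.map Prod.snd (ν.prod G) = G := by
    rw [Measure.map_snd_prod, measure_univ, one_smul]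
  -- integrability of |a|, a² on ν
  have hIa : Integrable (fun a => |a|) ν :=
    Integrable.mono' (integrable_const (β * B)) continuous_abs.aestronglyMeasurable
      (hae_ν.mono fun a ha => by rwa [Real.norm_eq_abs, abs_abs])
  have hIa2 : Integrable (fun a => a^2) ν :=
    Integrable.mono' (integrable_const ((β * B)^2)) (continuous_pow 2).aestronglyMeasurable
      (hae_ν.mono fun a ha => by
        rw [Real.norm_eq_abs, abs_of_nonneg (sq_nonneg a), ← sq_abs]
        exact pow_le_pow_left₀ (abs_nonneg a) ha 2)
  -- integrability of |b|, b² on G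
  have hIb : Integrable (fun b => |b|) G := by
    rw [← hG, integrable_map_measure continuous_abs.aestronglyMeasurable
      (measurable_const_mul c).aemeasurable]
    exact (integrable_abs_gaussian.const_mul c).congr
      (Filter.Eventually.of_forall fun x => by
        simp [Function.comp, abs_mul, abs_of_pos hc0])
  have hIb2 : Integrable (fun b => b^2) G := by
    rw [← hG, integrable_map_measure (continuous_pow 2).aestronglyMeasurable
      (measurable_const_mul c).aemeasurable]
    exact (integrable_sq_gaussian.const_mul (c^2)).congr
      (Filter.Eventually.of_forall fun x => by
        simp [Function.comp, mul_pow])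
  -- integrability on the product
  have hIa' : Integrable (fun p : ℝ × ℝ => |p.1|) (ν.prod G) := by
    rw [← Function.comp_def (fun a : ℝ => |a|) Prod.fst,
      ← integrable_map_measure (by rw [hfst]; exact continuous_abs.aestronglyMeasurable)
        measurable_fst.aemeasurable, hfst]
    exact hIa
  have hIb' : Integrable (fun p : ℝ × ℝ => |p.2|) (ν.prod G) := by
    rw [← Function.comp_def (fun a : ℝ => |a|) Prod.snd,
      ← integrable_map_measure (by rw [hsnd]; exact continuous_abs.aestronglyMeasurable)
        measurable_snd.aemeasurable, hsnd]
    exact hIb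
  have hIa2' : Integrable (fun p : ℝ × ℝ => p.1^2) (ν.prod G) := by
    rw [← Function.comp_def (fun a : ℝ => a^2) Prod.fst,
      ← integrable_map_measure (by rw [hfst]; exact (continuous_pow 2).aestronglyMeasurable)
        measurable_fst.aemeasurable, hfst]
    exact hIa2
  have hIb2' : Integrable (fun p : ℝ × ℝ => p.2^2) (ν.prod G) := by
    rw [← Function.comp_def (fun a : ℝ => a^2) Prod.snd,
      ← integrable_map_measure (by rw [hsnd]; exact (continuous_pow 2).aestronglyMeasurable)
        measurable_snd.aemeasurable, hsnd]
    exact hIb2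
  have hIsum : Integrable (fun p : ℝ × ℝ => |p.1| + |p.2|) (ν.prod G) := hIa'.add hIb'
  have hIadd : Integrable (fun p : ℝ × ℝ => |p.1 + p.2|) (ν.prod G) :=
    Integrable.mono' hIsum (continuous_abs.comp continuous_add).aestronglyMeasurable
      (Filter.Eventually.of_forall fun p => by
        rw [Real.norm_eq_abs, abs_abs]; exact abs_add_le _ _)
  have hIadd2 : Integrable (fun p : ℝ × ℝ => (p.1 + p.2)^2) (ν.prod G) :=
    Integrable.mono' ((hIa2'.const_mul 2).add (hIb2'.const_mul 2))
      ((continuous_pow 2).comp continuous_add).aestronglyMeasurable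
      (Filter.Eventually.of_forall fun p => by
        simp only [Pi.add_apply]
        rw [Real.norm_eq_abs, abs_of_nonneg (sq_nonneg _)]
        nlinarith [sq_nonneg (p.1 - p.2)])
  have habs : Integrable (fun y => |y|) (muBeta μ β) := by
    rw [muBeta, integrable_map_measure continuous_abs.aestronglyMeasurable
      measurable_add.aemeasurable]
    exact hIadd
  refine ⟨habs, ?_, ?_⟩
  · rw [muBeta, integrable_map_measure (continuous_pow 2).aestronglyMeasurable
      measurable_add.aemeasurable]
    exact hIadd2
  · have h1 : ∫ y, |y| ∂(muBeta μ β) = ∫ p : ℝ × ℝ, |p.1 + p.2| ∂(ν.prod G) := by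
      rw [muBeta, integral_map measurable_add.aemeasurable
        continuous_abs.aestronglyMeasurable]
    have h2 : ∫ p : ℝ × ℝ, |p.1 + p.2| ∂(ν.prod G) ≤ ∫ p : ℝ × ℝ, |p.1| + |p.2| ∂(ν.prod G) :=
      integral_mono hIadd hIsum fun p => abs_add_le _ _
    have hfst_int : ∫ a, |a| ∂ν = ∫ p : ℝ × ℝ, |p.1| ∂(ν.prod G) := by
      conv_lhs => rw [← hfst]
      exact integral_map measurable_fst.aemeasurable
        (by rw [hfst]; exact continuous_abs.aestronglyMeasurable)
    have hsnd_int : ∫ b, |b| ∂G = ∫ p : ℝ × ℝ, |p.2| ∂(ν.prod G) := by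
      conv_lhs => rw [← hsnd]
      exact integral_map measurable_snd.aemeasurable
        (by rw [hsnd]; exact continuous_abs.aestronglyMeasurable)
    have h3 : ∫ p : ℝ × ℝ, |p.1| + |p.2| ∂(ν.prod G)
        = (∫ a, |a| ∂ν) + ∫ b, |b| ∂G := by
      rw [integral_add hIa' hIb', hfst_int, hsnd_int]
    have h4 : ∫ a, |a| ∂ν ≤ β * B := by
      calc ∫ a, |a| ∂ν ≤ ∫ _, β * B ∂ν := integral_mono_ae hIa (integrable_const _) hae_ν
        _ = β * B := by rw [integral_const, probReal_univ]; simp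
    have h5 : ∫ b, |b| ∂G ≤ ∫ x, |x| ∂(gaussianReal 0 1) := by
      have : ∫ b, |b| ∂G = c * ∫ x, |x| ∂(gaussianReal 0 1) := by
        rw [← hG, integral_map (measurable_const_mul c).aemeasurable
          continuous_abs.aestronglyMeasurable, ← integral_const_mul]
        refine integral_congr_ae (Filter.Eventually.of_forall fun x => ?_)
        simp [abs_mul, abs_of_pos hc0]
      rw [this]
      have hM : 0 ≤ ∫ x, |x| ∂(gaussianReal 0 1) :=
        integral_nonneg fun x => abs_nonneg x
      nlinarith
    linarith [h1, h2, h3, h4, h5]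

lemma kl_bound {B β : ℝ} (μ : Measure ℝ) [IsProbabilityMeasure μ] (hβ0 : 0 < β) (hβ1 : β < 1)
    (hsupp : μ (Set.Icc (-B) B)ᶜ = 0) :
    klDivergence (muBeta μ β) (gaussianReal 0 1) ≤
      ENNReal.ofReal (Real.log ((Real.sqrt (1 - β ^ 2))⁻¹) +
        β * B / (1 - β ^ 2) * (β * B + ∫ x, |x| ∂(gaussianReal 0 1))) := by
  have hv : 0 < 1 - β ^ 2 := by nlinarith
  have hB : 0 ≤ B := by
    by_contra hB
    push_neg at hB
    have : Set.Icc (-B) B = ∅ := Set.Icc_eq_empty (by linarith)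
    rw [this, Set.compl_empty] at hsupp
    have h1 : μ Set.univ = 0 := hsupp
    rw [measure_univ] at h1
    exact one_ne_zero h1
  have hvnn : Real.toNNReal (1 - β ^ 2) ≠ 0 := (Real.toNNReal_pos.mpr hv).ne'
  haveI : IsProbabilityMeasure (Measure.map (fun x : ℝ => β * x) μ) :=
    Measure.isProbabilityMeasure_map (measurable_const_mul β).aemeasurable
  haveI : IsProbabilityMeasure (muBeta μ β) := by
    rw [muBeta]
    exact Measure.isProbabilityMeasure_map measurable_add.aemeasurable
  obtain ⟨habs, hsq, hmom⟩ := moments μ hβ0 hβ1 hsupp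
  have hc : 0 ≤ Real.log ((Real.sqrt (1 - β ^ 2))⁻¹) := by
    apply Real.log_nonneg
    rw [le_inv_comm₀ one_pos (Real.sqrt_pos.mpr hv)]
    simpa using Real.sqrt_le_one.mpr (by nlinarith : 1 - β ^ 2 ≤ 1)
  have hac := muBeta_ac μ hvnn
  have hllr : llr (muBeta μ β) (gaussianReal 0 1) =ᵐ[muBeta μ β]
      fun y => Real.log ((hRatio μ β y).toReal) := by
    refine (hac.ae_eq (muBeta_rnDeriv μ hvnn)).mono fun y hy => ?_
    simp only [llr]
    rw [hy]
  -- dominating function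
  have hDint : Integrable (fun y => Real.log ((Real.sqrt (1 - β ^ 2))⁻¹) + β^2*B^2/(2*(1-β^2)) +
      (β*B/(1-β^2) * |y| + β^2/(2*(1-β^2)) * y^2)) (muBeta μ β) :=
    (integrable_const _).add ((habs.const_mul _).add (hsq.const_mul _))
  have hint : Integrable (llr (muBeta μ β) (gaussianReal 0 1)) (muBeta μ β) := by
    refine hDint.mono' (measurable_llr _ _).aestronglyMeasurable ?_
    filter_upwards [hllr] with y hy
    rw [Real.norm_eq_abs, hy]
    have hup := log_hRatio_le μ hβ0 hβ1 hsupp y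
    have hlo := le_log_hRatio μ hβ0 hβ1 hsupp y
    have hb1 : β*B*|y|/(1-β^2) = β*B/(1-β^2) * |y| := by ring
    have hb2 : -(2*β*B*|y| + β^2*y^2 + β^2*B^2)/(2*(1-β^2))
        = -(β*B/(1-β^2)*|y| + β^2/(2*(1-β^2))*y^2 + β^2*B^2/(2*(1-β^2))) := by
      field_simp
    rw [hb1] at hup
    rw [hb2] at hlo
    have h1 : 0 ≤ β^2/(2*(1-β^2)) * y^2 := by positivity
    have h2 : 0 ≤ β*B/(1-β^2) * |y| := by positivity
    have h3 : 0 ≤ β^2*B^2/(2*(1-β^2)) := by positivity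
    rw [abs_le]
    constructor <;> linarith
  rw [klDivergence, if_pos ⟨hac, hint⟩]
  apply ENNReal.ofReal_le_ofReal
  have hIup : Integrable (fun y => Real.log ((Real.sqrt (1 - β ^ 2))⁻¹) +
      β*B/(1-β^2) * |y|) (muBeta μ β) := (integrable_const _).add (habs.const_mul _)
  calc ∫ y, llr (muBeta μ β) (gaussianReal 0 1) y ∂(muBeta μ β)
      ≤ ∫ y, (Real.log ((Real.sqrt (1 - β ^ 2))⁻¹) + β*B/(1-β^2) * |y|) ∂(muBeta μ β) := by
        refine integral_mono_ae hint hIup ?_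
        filter_upwards [hllr] with y hy
        rw [hy]
        have hup := log_hRatio_le μ hβ0 hβ1 hsupp y
        have hb1 : β*B*|y|/(1-β^2) = β*B/(1-β^2) * |y| := by ring
        linarith [hb1 ▸ hup]
    _ = Real.log ((Real.sqrt (1 - β ^ 2))⁻¹) +
        β*B/(1-β^2) * ∫ y, |y| ∂(muBeta μ β) := by
        rw [integral_add (integrable_const _) (habs.const_mul _), integral_const, probReal_univ,
          integral_const_mul]
        simp
    _ ≤ _ := by
        have hk : 0 ≤ β*B/(1-β^2) := by positivity
        have := mul_le_mul_of_nonneg_left hmom hk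
        linarith

/-- For a Borel probability measure `μ` on `ℝ` supported in `[-B,B]`,
`KL(μ_β ‖ N(0,1)) → 0` as `β → 0` from the right. -/
theorem statement15 (B : ℝ) (hB : 0 < B) (μ : Measure ℝ) [IsProbabilityMeasure μ]
    (hsupp : μ (Set.Icc (-B) B)ᶜ = 0) :
    Tendsto (fun β : ℝ => klDivergence (muBeta μ β) (gaussianReal 0 1))
      (nhdsWithin 0 (Set.Ioi 0)) (nhds 0) := by
  set M := ∫ x, |x| ∂(gaussianReal 0 1) with hM
  set g : ℝ → ℝ := fun β => Real.log ((Real.sqrt (1 - β ^ 2))⁻¹) +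
    β * B / (1 - β ^ 2) * (β * B + M) with hg
  have hgc : ContinuousAt g 0 := by
    have h1 : ContinuousAt (fun β : ℝ => 1 - β ^ 2) 0 := by fun_prop
    have h1' : (fun β : ℝ => 1 - β ^ 2) 0 ≠ 0 := by norm_num
    have h2 : ContinuousAt (fun β : ℝ => Real.sqrt (1 - β ^ 2)) 0 :=
      Real.continuous_sqrt.continuousAt.comp h1
    have h3 : ContinuousAt (fun β : ℝ => (Real.sqrt (1 - β ^ 2))⁻¹) 0 := by
      refine h2.inv₀ ?_
      simp [Real.sqrt_one]
    have h4 : ContinuousAt (fun β : ℝ => Real.log ((Real.sqrt (1 - β ^ 2))⁻¹)) 0 := by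
      refine (Real.continuousAt_log ?_).comp h3
      simp [Real.sqrt_one]
    have h5 : ContinuousAt (fun β : ℝ => β * B / (1 - β ^ 2) * (β * B + M)) 0 := by
      refine ContinuousAt.mul (ContinuousAt.div (by fun_prop) h1 h1') (by fun_prop)
    exact h4.add h5
  have hg0 : g 0 = 0 := by
    simp [hg, Real.sqrt_one]
  have hgt : Tendsto (fun β => ENNReal.ofReal (g β)) (nhdsWithin 0 (Set.Ioi 0)) (nhds 0) := by
    have this : Tendsto g (nhdsWithin 0 (Set.Ioi 0)) (nhds (g 0)) :=
      hgc.tendsto.mono_left nhdsWithin_le_nhds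
    rw [hg0] at this
    have h := ENNReal.tendsto_ofReal this
    rwa [ENNReal.ofReal_zero] at h
  refine tendsto_of_tendsto_of_tendsto_of_le_of_le' tendsto_const_nhds hgt
    (Filter.Eventually.of_forall fun β => zero_le) ?_
  have hmem : Set.Ioo (0:ℝ) 1 ∈ nhdsWithin 0 (Set.Ioi 0) :=
    Ioo_mem_nhdsGT_of_mem (by norm_num : (0:ℝ) ∈ Set.Ico 0 1)
  filter_upwards [hmem] with β hβ
  exact kl_bound μ hβ.1 hβ.2 hsupp
end
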